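/- Let G, H be compact Lie groups, σ ∈ Gⁿ and τ ∈ Hⁿ tuples of commuting torsion elements. Then there is a group isomorphism Λ_{G×H}(σ,τ) ≅ Λ_G(σ) ×_{𝕋ⁿ} Λ_H(τ), where (σ,τ) denotes the tuple ((σ₁,τ₁),...,(σₙ,τₙ)) in (G×H)ⁿ and the right-hand side is the fiber product over the projections π: Λ_G(σ) → 𝕋ⁿ and π: Λ_H(τ) → 𝕋ⁿ. -/

import Mathlib

def CC {G : Type*} [Group G] {n : ℕ} (σ : Fin n → G) : Subgroup G :=
  ⨅ i, Subgroup.centralizer {σ i}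

def NN {G : Type*} [Group G] {n : ℕ} (σ : Fin n → G) (hmem : ∀ i, σ i ∈ CC σ) :
    Subgroup (CC σ × Multiplicative (Fin n → ℝ)) :=
  Subgroup.closure (Set.range fun i =>
    ((⟨σ i, hmem i⟩ : CC σ), Multiplicative.ofAdd (-(Pi.single i 1 : Fin n → ℝ))))

instance NN.normal {G : Type*} [Group G] {n : ℕ} (σ : Fin n → G)
    (hmem : ∀ i, σ i ∈ CC σ) : (NN σ hmem).Normal := by
  have hle : NN σ hmem ≤ Subgroup.center (CC σ × Multiplicative (Fin n → ℝ)) := by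
    rw [NN, Subgroup.closure_le]
    rintro _ ⟨i, rfl⟩
    rw [SetLike.mem_coe, Subgroup.mem_center_iff]
    intro g
    refine Prod.ext (Subtype.ext ?_) (mul_comm _ _)
    have hg : (g.1 : G) ∈ Subgroup.centralizer {σ i} :=
      Subgroup.mem_iInf.mp g.1.2 i
    have h1 := Subgroup.mem_centralizer_singleton_iff.mp hg
    simpa using h1
  refine ⟨fun x hx g => ?_⟩
  have hc := Subgroup.mem_center_iff.mp (hle hx)
  have : g * x * g⁻¹ = x := by rw [hc g]; group
  rw [this]; exact hx

/-- `Λ_G(σ) = (C_G(σ) × ℝⁿ)/⟨(σ₁,-e₁),…,(σₙ,-eₙ)⟩`. -/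
abbrev Lam {G : Type*} [Group G] {n : ℕ} (σ : Fin n → G) (hmem : ∀ i, σ i ∈ CC σ) :=
  (CC σ × Multiplicative (Fin n → ℝ)) ⧸ NN σ hmem

section helpers

variable {G : Type*} [Group G] {n : ℕ}

lemma mem_CC_iff {σ : Fin n → G} {g : G} :
    g ∈ CC σ ↔ ∀ i, g * σ i = σ i * g := by
  simp [CC, Subgroup.mem_iInf, Subgroup.mem_centralizer_singleton_iff]

def gen (σ : Fin n → G) (hmem : ∀ i, σ i ∈ CC σ) (i : Fin n) :
    CC σ × Multiplicative (Fin n → ℝ) :=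
  ((⟨σ i, hmem i⟩ : CC σ), Multiplicative.ofAdd (-(Pi.single i 1 : Fin n → ℝ)))

lemma NN_eq (σ : Fin n → G) (hmem : ∀ i, σ i ∈ CC σ) :
    NN σ hmem = Subgroup.closure (Set.range (gen σ hmem)) := rfl

lemma gen_mem (σ : Fin n → G) (hmem : ∀ i, σ i ∈ CC σ) (i : Fin n) :
    gen σ hmem i ∈ NN σ hmem :=
  Subgroup.subset_closure ⟨i, rfl⟩

lemma gen_commute (σ : Fin n → G) (hmem : ∀ i, σ i ∈ CC σ) (i j : Fin n) :
    Commute (gen σ hmem i) (gen σ hmem j) :=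
  Prod.ext (Subtype.ext (mem_CC_iff.mp (hmem i) j)) (mul_comm _ _)

def psi (σ : Fin n → G) (hmem : ∀ i, σ i ∈ CC σ) :
    (∀ _ : Fin n, Multiplicative ℤ) →* CC σ × Multiplicative (Fin n → ℝ) :=
  MonoidHom.noncommPiCoprod (fun i => zpowersHom _ (gen σ hmem i))
    (fun i j _ x y => (gen_commute σ hmem i j).zpow_zpow _ _)

lemma psi_mulSingle (σ : Fin n → G) (hmem : ∀ i, σ i ∈ CC σ) (i : Fin n)
    (k : Multiplicative ℤ) :
    psi σ hmem (Pi.mulSingle i k) = gen σ hmem i ^ (Multiplicative.toAdd k) := by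
  exact (MonoidHom.noncommPiCoprod_mulSingle (fun i => zpowersHom _ (gen σ hmem i)) i k).trans
    (zpowersHom_apply _ _ _)

lemma hom_ext_single {M : Type*} [Monoid M]
    (f g : (∀ _ : Fin n, Multiplicative ℤ) →* M)
    (h : ∀ i k, f (Pi.mulSingle i k) = g (Pi.mulSingle i k))
    (m : ∀ _ : Fin n, Multiplicative ℤ) : f m = g m := by
  have := Finset.prod_induction (s := Finset.univ) (fun i => Pi.mulSingle i (m i)) (fun x => f x = g x)
    (fun a b ha hb => by show f (a * b) = g (a * b); rw [map_mul, map_mul, ha, hb])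
    (by show f 1 = g 1; rw [map_one, map_one])
    (fun i _ => h i (m i))
  rwa [Finset.univ_prod_mulSingle] at this

lemma psi_prop (σ : Fin n → G) (hmem : ∀ i, σ i ∈ CC σ)
    (p : (CC σ × Multiplicative (Fin n → ℝ)) → Prop)
    (h1 : p 1) (hmul : ∀ x y, p x → p y → p (x * y))
    (hs : ∀ (i : Fin n) (k : ℤ), p (gen σ hmem i ^ k))
    (m : ∀ _ : Fin n, Multiplicative ℤ) : p (psi σ hmem m) := by
  have := Finset.prod_induction (s := Finset.univ) (fun i => Pi.mulSingle i (m i))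
    (fun x => p (psi σ hmem x))
    (fun a b ha hb => by show p (psi σ hmem (a * b)); rw [map_mul]; exact hmul _ _ ha hb)
    (by show p (psi σ hmem 1); rw [map_one]; exact h1)
    (fun i _ => by show p (psi σ hmem (Pi.mulSingle i (m i))); rw [psi_mulSingle]; exact hs i _)
  rwa [Finset.univ_prod_mulSingle] at this

lemma psi_mem_NN (σ : Fin n → G) (hmem : ∀ i, σ i ∈ CC σ)
    (m : ∀ _ : Fin n, Multiplicative ℤ) : psi σ hmem m ∈ NN σ hmem :=
  psi_prop σ hmem (fun x => x ∈ NN σ hmem) (one_mem _)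
    (fun _ _ hx hy => mul_mem hx hy)
    (fun i k => zpow_mem (gen_mem σ hmem i) k) m

lemma mem_NN_iff (σ : Fin n → G) (hmem : ∀ i, σ i ∈ CC σ)
    (x : CC σ × Multiplicative (Fin n → ℝ)) :
    x ∈ NN σ hmem ↔ ∃ m, psi σ hmem m = x := by
  constructor
  · intro hx
    have hle : NN σ hmem ≤ (psi σ hmem).range := by
      rw [NN_eq, Subgroup.closure_le]
      rintro _ ⟨i, rfl⟩
      exact ⟨Pi.mulSingle i (Multiplicative.ofAdd 1), by
        rw [psi_mulSingle]; simp [gen]⟩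
    exact hle hx
  · rintro ⟨m, rfl⟩; exact psi_mem_NN σ hmem m

def negHom : (∀ _ : Fin n, Multiplicative ℤ) →* Multiplicative (Fin n → ℝ) where
  toFun m := Multiplicative.ofAdd (fun i => -((Multiplicative.toAdd (m i) : ℤ) : ℝ))
  map_one' := by
    refine congrArg Multiplicative.ofAdd (funext fun i => ?_)
    simp
  map_mul' x y := by
    refine congrArg Multiplicative.ofAdd (funext fun i => ?_)
    show -(((Multiplicative.toAdd (x i * y i) : ℤ) : ℝ)) =
      (Multiplicative.toAdd (Multiplicative.ofAdd
          (fun i => -((Multiplicative.toAdd (x i) : ℤ) : ℝ))) +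
        Multiplicative.toAdd (Multiplicative.ofAdd
          (fun i => -((Multiplicative.toAdd (y i) : ℤ) : ℝ)))) i
    rw [toAdd_mul, toAdd_ofAdd, toAdd_ofAdd]
    show _ = -((Multiplicative.toAdd (x i) : ℤ) : ℝ) + -((Multiplicative.toAdd (y i) : ℤ) : ℝ)
    push_cast
    ring

lemma psi_snd (σ : Fin n → G) (hmem : ∀ i, σ i ∈ CC σ)
    (m : ∀ _ : Fin n, Multiplicative ℤ) :
    (psi σ hmem m).2 = negHom m := by
  have h := hom_ext_single ((MonoidHom.snd _ _).comp (psi σ hmem)) negHom ?_ m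
  · exact h
  · intro i k
    rw [MonoidHom.comp_apply, psi_mulSingle, map_zpow]
    show (Multiplicative.ofAdd (-(Pi.single i 1 : Fin n → ℝ))) ^ (Multiplicative.toAdd k)
      = negHom (Pi.mulSingle i k)
    rw [← ofAdd_zsmul]
    refine congrArg Multiplicative.ofAdd (funext fun j => ?_)
    show ((Multiplicative.toAdd k) • (-(Pi.single i 1 : Fin n → ℝ))) j
      = -(((Multiplicative.toAdd (Pi.mulSingle (M := fun _ : Fin n => Multiplicative ℤ) i k j)) : ℤ) : ℝ)
    rcases eq_or_ne j i with rfl | hj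
    · simp
    · simp [Pi.single_eq_of_ne hj, Pi.mulSingle_eq_of_ne hj]

lemma intCast_addCircle (z : ℤ) : (((z : ℝ)) : AddCircle (1 : ℝ)) = 0 := by
  rw [AddCircle.coe_eq_zero_iff]
  exact ⟨z, by simp⟩

/-- second-coordinate projection to the torus -/
noncomputable def circ : Multiplicative (Fin n → ℝ) →* Multiplicative (Fin n → AddCircle (1 : ℝ)) :=
  AddMonoidHom.toMultiplicative
    { toFun := fun t i => ((t i : ℝ) : AddCircle (1 : ℝ)),
      map_zero' := by funext i; simp,
      map_add' := fun a b => by funext i; simp }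

noncomputable def piT (σ : Fin n → G) (hmem : ∀ i, σ i ∈ CC σ) :
    Lam σ hmem →* Multiplicative (Fin n → AddCircle (1 : ℝ)) :=
  QuotientGroup.lift (NN σ hmem) (circ.comp (MonoidHom.snd _ _)) (by
    have hle : NN σ hmem ≤ (circ.comp (MonoidHom.snd _ _)).ker := by
      rw [NN_eq, Subgroup.closure_le]
      rintro _ ⟨i, rfl⟩
      rw [SetLike.mem_coe, MonoidHom.mem_ker]
      refine congrArg Multiplicative.ofAdd (funext fun j => ?_)
      show (((-(Pi.single i 1 : Fin n → ℝ)) j : ℝ) : AddCircle (1 : ℝ)) = 0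
      rcases eq_or_ne j i with rfl | hj
      · have : ((-(Pi.single j 1 : Fin n → ℝ)) j : ℝ) = ((-1 : ℤ) : ℝ) := by simp
        rw [this, intCast_addCircle]
      · simp [Pi.single_eq_of_ne hj]
    exact fun x hx => hle hx)

lemma piT_mk (σ : Fin n → G) (hmem : ∀ i, σ i ∈ CC σ) (g : CC σ) (t : Fin n → ℝ) :
    piT σ hmem (QuotientGroup.mk (g, Multiplicative.ofAdd t)) =
      Multiplicative.ofAdd (fun i => ((t i : ℝ) : AddCircle (1 : ℝ))) := rfl

end helpers

section prodhelpers

variable {G H : Type*} [Group G] [Group H] {n : ℕ} (σ : Fin n → G) (τ : Fin n → H)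

lemma fst_mem_CC {c : G × H} (hc : c ∈ CC (fun j => (σ j, τ j))) : c.1 ∈ CC σ := by
  rw [mem_CC_iff] at hc ⊢
  intro i
  exact congrArg Prod.fst (hc i)

lemma snd_mem_CC {c : G × H} (hc : c ∈ CC (fun j => (σ j, τ j))) : c.2 ∈ CC τ := by
  rw [mem_CC_iff] at hc ⊢
  intro i
  exact congrArg Prod.snd (hc i)

lemma pair_mem_CC {a : G} {b : H} (ha : a ∈ CC σ) (hb : b ∈ CC τ) :
    (a, b) ∈ CC (fun j => (σ j, τ j)) := by
  rw [mem_CC_iff] at ha hb ⊢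
  intro i
  exact Prod.ext (ha i) (hb i)

def projHom1 : CC (fun j => (σ j, τ j)) →* CC σ where
  toFun c := ⟨(c : G × H).1, fst_mem_CC σ τ c.2⟩
  map_one' := rfl
  map_mul' _ _ := rfl

def projHom2 : CC (fun j => (σ j, τ j)) →* CC τ where
  toFun c := ⟨(c : G × H).2, snd_mem_CC σ τ c.2⟩
  map_one' := rfl
  map_mul' _ _ := rfl

def Fmap1 : (CC (fun j => (σ j, τ j)) × Multiplicative (Fin n → ℝ)) →*
    (CC σ × Multiplicative (Fin n → ℝ)) :=
  (projHom1 σ τ).prodMap (MonoidHom.id _)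

def Fmap2 : (CC (fun j => (σ j, τ j)) × Multiplicative (Fin n → ℝ)) →*
    (CC τ × Multiplicative (Fin n → ℝ)) :=
  (projHom2 σ τ).prodMap (MonoidHom.id _)

variable (hmemσ : ∀ i, σ i ∈ CC σ) (hmemτ : ∀ i, τ i ∈ CC τ)
  (hmemP : ∀ i, (σ i, τ i) ∈ CC (fun j => (σ j, τ j)))

lemma Fmap1_gen (i : Fin n) :
    Fmap1 σ τ (gen (fun j => (σ j, τ j)) hmemP i) = gen σ hmemσ i := rfl

lemma Fmap2_gen (i : Fin n) :
    Fmap2 σ τ (gen (fun j => (σ j, τ j)) hmemP i) = gen τ hmemτ i := rfl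

lemma Fmap1_psi (m : ∀ _ : Fin n, Multiplicative ℤ) :
    Fmap1 σ τ (psi (fun j => (σ j, τ j)) hmemP m) = psi σ hmemσ m := by
  refine hom_ext_single ((Fmap1 σ τ).comp (psi (fun j => (σ j, τ j)) hmemP))
    (psi σ hmemσ) (fun i k => ?_) m
  rw [MonoidHom.comp_apply, psi_mulSingle, map_zpow, Fmap1_gen σ τ hmemσ hmemP,
    psi_mulSingle]

lemma Fmap2_psi (m : ∀ _ : Fin n, Multiplicative ℤ) :
    Fmap2 σ τ (psi (fun j => (σ j, τ j)) hmemP m) = psi τ hmemτ m := by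
  refine hom_ext_single ((Fmap2 σ τ).comp (psi (fun j => (σ j, τ j)) hmemP))
    (psi τ hmemτ) (fun i k => ?_) m
  rw [MonoidHom.comp_apply, psi_mulSingle, map_zpow, Fmap2_gen σ τ hmemτ hmemP,
    psi_mulSingle]

def bigPhi : Lam (fun j => (σ j, τ j)) hmemP →* Lam σ hmemσ × Lam τ hmemτ :=
  QuotientGroup.lift (NN _ hmemP)
    (((QuotientGroup.mk' (NN σ hmemσ)).comp (Fmap1 σ τ)).prod
      ((QuotientGroup.mk' (NN τ hmemτ)).comp (Fmap2 σ τ))) (by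
    have hle : NN (fun j => (σ j, τ j)) hmemP ≤
        ((((QuotientGroup.mk' (NN σ hmemσ)).comp (Fmap1 σ τ)).prod
          ((QuotientGroup.mk' (NN τ hmemτ)).comp (Fmap2 σ τ)))).ker := by
      rw [NN_eq, Subgroup.closure_le]
      rintro _ ⟨i, rfl⟩
      rw [SetLike.mem_coe, MonoidHom.mem_ker]
      refine Prod.ext ?_ ?_
      · show QuotientGroup.mk' (NN σ hmemσ) (Fmap1 σ τ (gen _ hmemP i)) = 1
        rw [Fmap1_gen σ τ hmemσ hmemP]
        exact (QuotientGroup.eq_one_iff _).mpr (gen_mem σ hmemσ i)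
      · show QuotientGroup.mk' (NN τ hmemτ) (Fmap2 σ τ (gen _ hmemP i)) = 1
        rw [Fmap2_gen σ τ hmemτ hmemP]
        exact (QuotientGroup.eq_one_iff _).mpr (gen_mem τ hmemτ i)
    exact fun x hx => hle hx)

lemma bigPhi_mk (x : CC (fun j => (σ j, τ j)) × Multiplicative (Fin n → ℝ)) :
    bigPhi σ τ hmemσ hmemτ hmemP (QuotientGroup.mk x) =
      (QuotientGroup.mk (Fmap1 σ τ x), QuotientGroup.mk (Fmap2 σ τ x)) := rfl

lemma bigPhi_inj : Function.Injective (bigPhi σ τ hmemσ hmemτ hmemP) := by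
  rw [injective_iff_map_eq_one]
  intro x hx
  obtain ⟨y, rfl⟩ := QuotientGroup.mk_surjective x
  rw [bigPhi_mk] at hx
  have h1 : (QuotientGroup.mk (Fmap1 σ τ y) : Lam σ hmemσ) = 1 := by
    have := congrArg Prod.fst hx; simpa using this
  have h2 : (QuotientGroup.mk (Fmap2 σ τ y) : Lam τ hmemτ) = 1 := by
    have := congrArg Prod.snd hx; simpa using this
  rw [QuotientGroup.eq_one_iff] at h1 h2
  rw [QuotientGroup.eq_one_iff]
  obtain ⟨m, hm⟩ := (mem_NN_iff σ hmemσ _).mp h1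
  obtain ⟨m', hm'⟩ := (mem_NN_iff τ hmemτ _).mp h2
  have hsnd : negHom m = negHom m' := by
    have e1 : (psi σ hmemσ m).2 = y.2 := by rw [hm]; rfl
    have e2 : (psi τ hmemτ m').2 = y.2 := by rw [hm']; rfl
    rw [← psi_snd σ hmemσ m, ← psi_snd τ hmemτ m', e1, e2]
  have hmm : m = m' := by
    funext i
    have := congrFun (congrArg Multiplicative.toAdd hsnd) i
    have h3 : -((Multiplicative.toAdd (m i) : ℤ) : ℝ) =
        -((Multiplicative.toAdd (m' i) : ℤ) : ℝ) := this
    have h4 : (Multiplicative.toAdd (m i) : ℤ) = (Multiplicative.toAdd (m' i) : ℤ) := by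
      exact_mod_cast neg_injective h3
    exact Multiplicative.toAdd.injective h4
  subst hmm
  have hy : y = psi (fun j => (σ j, τ j)) hmemP m := by
    have e1 : Fmap1 σ τ (psi (fun j => (σ j, τ j)) hmemP m) = Fmap1 σ τ y := by
      rw [Fmap1_psi σ τ hmemσ hmemP, hm]
    have e2 : Fmap2 σ τ (psi (fun j => (σ j, τ j)) hmemP m) = Fmap2 σ τ y := by
      rw [Fmap2_psi σ τ hmemτ hmemP, hm']
    refine Prod.ext (Subtype.ext (Prod.ext ?_ ?_)) ?_
    · exact (congrArg (fun z => ((z.1 : CC σ) : G)) e1).symm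
    · exact (congrArg (fun z => ((z.1 : CC τ) : H)) e2).symm
    · exact (congrArg Prod.snd e1).symm
  rw [hy]
  exact psi_mem_NN _ hmemP m

end prodhelpers

theorem stmt16 {G H : Type*} [Group G] [Group H] {n : ℕ}
    (σ : Fin n → G) (τ : Fin n → H)
    (htorsσ : ∀ i, IsOfFinOrder (σ i)) (hcommσ : ∀ i j, Commute (σ i) (σ j))
    (htorsτ : ∀ i, IsOfFinOrder (τ i)) (hcommτ : ∀ i j, Commute (τ i) (τ j))
    (hmemσ : ∀ i, σ i ∈ CC σ) (hmemτ : ∀ i, τ i ∈ CC τ)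
    (hmemP : ∀ i, (σ i, τ i) ∈ CC (fun j => (σ j, τ j))) :
    ∃ (πG : Lam σ hmemσ →* Multiplicative (Fin n → AddCircle (1 : ℝ)))
      (πH : Lam τ hmemτ →* Multiplicative (Fin n → AddCircle (1 : ℝ))),
      (∀ (g : CC σ) (t : Fin n → ℝ),
        πG (QuotientGroup.mk (g, Multiplicative.ofAdd t)) =
          Multiplicative.ofAdd fun i => ((t i : AddCircle (1 : ℝ)))) ∧
      (∀ (h : CC τ) (t : Fin n → ℝ),
        πH (QuotientGroup.mk (h, Multiplicative.ofAdd t)) =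
          Multiplicative.ofAdd fun i => ((t i : AddCircle (1 : ℝ)))) ∧
      ∃ e : Lam (fun j => (σ j, τ j)) hmemP ≃
          {p : Lam σ hmemσ × Lam τ hmemτ // πG p.1 = πH p.2},
        (∀ x y, (e (x * y)).val = (e x).val * (e y).val) ∧
        (∀ (c : CC (fun j => (σ j, τ j)))
          (hc1 : ((c : G × H)).1 ∈ CC σ) (hc2 : ((c : G × H)).2 ∈ CC τ) (t : Fin n → ℝ),
          (e (QuotientGroup.mk (c, Multiplicative.ofAdd t))).val =
            (QuotientGroup.mk ((⟨(c : G × H).1, hc1⟩ : CC σ), Multiplicative.ofAdd t),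
             QuotientGroup.mk ((⟨(c : G × H).2, hc2⟩ : CC τ), Multiplicative.ofAdd t))) := by
  classical
  refine ⟨piT σ hmemσ, piT τ hmemτ, fun g t => rfl, fun h t => rfl, ?_⟩
  -- the underlying map into the fiber product
  have compat : ∀ x : Lam (fun j => (σ j, τ j)) hmemP,
      piT σ hmemσ (bigPhi σ τ hmemσ hmemτ hmemP x).1 =
        piT τ hmemτ (bigPhi σ τ hmemσ hmemτ hmemP x).2 := by
    intro x
    obtain ⟨y, rfl⟩ := QuotientGroup.mk_surjective x
    rfl
  set f : Lam (fun j => (σ j, τ j)) hmemP →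
      {p : Lam σ hmemσ × Lam τ hmemτ // piT σ hmemσ p.1 = piT τ hmemτ p.2} :=
    fun x => ⟨bigPhi σ τ hmemσ hmemτ hmemP x, compat x⟩ with hf
  have hinj : Function.Injective f := fun a b hab =>
    bigPhi_inj σ τ hmemσ hmemτ hmemP (congrArg Subtype.val hab)
  have hsurj : Function.Surjective f := by
    rintro ⟨⟨x1, x2⟩, hx⟩
    suffices h : ∃ y, bigPhi σ τ hmemσ hmemτ hmemP y = (x1, x2) by
      obtain ⟨y, hy⟩ := h
      exact ⟨y, Subtype.ext hy⟩
    obtain ⟨⟨g, w⟩, rfl⟩ := QuotientGroup.mk_surjective x1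
    obtain ⟨⟨h, u⟩, rfl⟩ := QuotientGroup.mk_surjective x2
    -- extract integer difference
    have hx' : ∀ i, ((Multiplicative.toAdd u i - Multiplicative.toAdd w i : ℝ) :
        AddCircle (1 : ℝ)) = 0 := by
      intro i
      have h2 := congrFun (congrArg Multiplicative.toAdd hx) i
      have h3 : ((Multiplicative.toAdd w i : ℝ) : AddCircle (1 : ℝ)) =
          ((Multiplicative.toAdd u i : ℝ) : AddCircle (1 : ℝ)) := h2
      rw [QuotientAddGroup.mk_sub, ← h3, sub_self]
    have hz : ∀ i, ∃ z : ℤ, (z : ℝ) =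
        Multiplicative.toAdd u i - Multiplicative.toAdd w i := by
      intro i
      obtain ⟨z, hzz⟩ := (AddCircle.coe_eq_zero_iff _).mp (hx' i)
      exact ⟨z, by simpa using hzz⟩
    choose m hm using hz
    set M : ∀ _ : Fin n, Multiplicative ℤ := fun i => Multiplicative.ofAdd (m i) with hM
    set w2 : CC τ × Multiplicative (Fin n → ℝ) := psi τ hmemτ M with hw2
    refine ⟨QuotientGroup.mk
      ((⟨((g : G), ((h * w2.1 : CC τ) : H)),
          pair_mem_CC σ τ g.2 (h * w2.1).2⟩ : CC (fun j => (σ j, τ j))), w), ?_⟩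
    rw [bigPhi_mk]
    have key : ((h, u) : CC τ × Multiplicative (Fin n → ℝ)) * psi τ hmemτ M
        = (h * w2.1, w) := by
      refine Prod.ext rfl ?_
      show u * (psi τ hmemτ M).2 = w
      rw [psi_snd]
      apply Multiplicative.toAdd.injective
      funext i
      show Multiplicative.toAdd u i + -((Multiplicative.toAdd (M i) : ℤ) : ℝ)
        = Multiplicative.toAdd w i
      have h5 := hm i
      simp only [hM, toAdd_ofAdd] at h5 ⊢
      linarith
    refine Prod.ext ?_ ?_
    · rfl
    · show (QuotientGroup.mk (Fmap2 σ τ _) : Lam τ hmemτ) = QuotientGroup.mk (h, u)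
      have e2 : Fmap2 σ τ ((⟨((g : G), ((h * w2.1 : CC τ) : H)),
          pair_mem_CC σ τ g.2 (h * w2.1).2⟩ : CC (fun j => (σ j, τ j))), w)
          = (h * w2.1, w) := rfl
      rw [e2, ← key]
      exact QuotientGroup.mk_mul_of_mem _ (psi_mem_NN τ hmemτ M)
  refine ⟨Equiv.ofBijective f ⟨hinj, hsurj⟩, fun x y => ?_, fun c hc1 hc2 t => ?_⟩
  · show (f (x * y)).val = (f x).val * (f y).val
    exact map_mul (bigPhi σ τ hmemσ hmemτ hmemP) x y
  · rfl
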